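/- Let (X,d) be a compact metric space and f_{0,∞} = {f_n}_{n=0}^∞ a sequence of continuous self-maps of X. If (X, f_{0,∞}) has the specification property, then so does the induced system (𝓜(X), f̂_{0,∞}). -/

import Mathlib

open MeasureTheory Filter

/-- `nacomp f n = f_{n-1} ∘ ⋯ ∘ f_0` (with `nacomp f 0 = id`): the time-`n` map of the
non-autonomous system `(X, f_{0,∞})`. -/
def nacomp {Y : Type*} (f : ℕ → Y → Y) : ℕ → Y → Y
  | 0 => id
  | n + 1 => f n ∘ nacomp f n

/-- The induced pushforward map `f̂` on the space `𝓜(X)` of Borel probability measures,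
equipped with the Lévy–Prokhorov metric. -/
noncomputable def inducedMap {X : Type*} [MetricSpace X] [MeasurableSpace X] [BorelSpace X]
    (f : X → X) (hf : Continuous f) :
    LevyProkhorov (ProbabilityMeasure X) → LevyProkhorov (ProbabilityMeasure X) :=
  fun μ => (LevyProkhorov.toMeasureEquiv (α := ProbabilityMeasure X)).symm
    (((LevyProkhorov.toMeasureEquiv (α := ProbabilityMeasure X)) μ).map hf.measurable.aemeasurable)

/-- The specification property of the non-autonomous system given by the maps `f n`:
for every `ε > 0` there is `M ≥ 1` such that for any `k ≥ 2` points `y 0, …, y (k-1)` and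
any non-negative integers `a 0 ≤ b 0 < a 1 ≤ b 1 < ⋯ < a (k-1) ≤ b (k-1)` with
`a (i+1) - b i ≥ M`, there is `z` tracing each `y i` within `ε` on the time window
`[a i, b i]`. -/
def NASpecification {Y : Type*} [PseudoMetricSpace Y] (f : ℕ → Y → Y) : Prop :=
  ∀ ε : ℝ, 0 < ε → ∃ M : ℕ, 1 ≤ M ∧ ∀ k, 2 ≤ k → ∀ y : ℕ → Y, ∀ a b : ℕ → ℕ,
    (∀ i, i < k → a i ≤ b i) → (∀ i, i + 1 < k → b i + M ≤ a (i + 1)) →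
    ∃ z : Y, ∀ i, i < k → ∀ n, a i ≤ n → n ≤ b i →
      dist (nacomp f n z) (nacomp f n (y i)) ≤ ε

/-- The composed maps of a non-autonomous system are continuous. -/
lemma nacomp_continuous {X : Type*} [TopologicalSpace X] (f : ℕ → X → X)
    (hf : ∀ n, Continuous (f n)) : ∀ n, Continuous (nacomp f n)
  | 0 => continuous_id
  | n + 1 => (hf n).comp (nacomp_continuous f hf n)

/-- Coupling bound for the Lévy-Prokhorov edistance: two pushforwards of the same measure
under uniformly close maps are close in the Lévy-Prokhorov edistance. -/
lemma levyProkhorovEDist_map_le_of_forall_dist_le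
    {α X : Type*} [MeasurableSpace α] [MetricSpace X] [MeasurableSpace X]
    [OpensMeasurableSpace X]
    (m : Measure α) (g g' : α → X) (hg : Measurable g) (hg' : Measurable g')
    {r : ℝ} (hr : 0 ≤ r) (hb : ∀ t, dist (g t) (g' t) ≤ r) :
    levyProkhorovEDist (m.map g) (m.map g') ≤ ENNReal.ofReal r := by
  apply levyProkhorovEDist_le_of_forall
  intro ε B hε hεtop hB
  have hrε : r < ε.toReal := (ENNReal.ofReal_lt_iff_lt_toReal hr hεtop.ne).mp hε
  have key : ∀ (u u' : α → X), Measurable u → Measurable u' →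
      (∀ t, dist (u t) (u' t) ≤ r) →
      (m.map u) B ≤ (m.map u') (Metric.thickening ε.toReal B) + ε := by
    intro u u' hu hu' hd
    rw [Measure.map_apply hu hB,
      Measure.map_apply hu' Metric.isOpen_thickening.measurableSet]
    refine le_trans (measure_mono fun t ht => ?_) (le_add_right le_rfl)
    exact Metric.mem_thickening_iff.2
      ⟨u t, ht, lt_of_le_of_lt (by rw [dist_comm]; exact hd t) hrε⟩
  exact ⟨key g g' hg hg' hb, key g' g hg' hg fun t => (dist_comm (g t) (g' t)) ▸ hb t⟩

/-- The `i`-th marginal of a finite product of probability measures. -/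
lemma measure_pi_map_eval {ι : Type*} [Fintype ι] {α : ι → Type*}
    [∀ i, MeasurableSpace (α i)] (μ : ∀ i, Measure (α i))
    [∀ i, IsProbabilityMeasure (μ i)] (i : ι) :
    (Measure.pi μ).map (Function.eval i) = μ i := by
  classical
  ext s hs
  rw [Measure.map_apply (measurable_pi_apply i) hs]
  have hpre : Function.eval i ⁻¹' s =
      Set.pi Set.univ (Function.update (fun j => (Set.univ : Set (α j))) i s) := by
    ext v
    simp only [Set.mem_preimage, Set.mem_univ_pi]
    constructor
    · intro hv j
      by_cases hj : j = i
      · subst hj; simpa using hv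
      · simp [Function.update_of_ne hj]
    · intro hv
      have := hv i
      simpa using this
  rw [hpre, Measure.pi_pi,
    Fintype.prod_eq_single i (fun j hj => by simp [Function.update_of_ne hj])]
  simp

/-- Uniform equicontinuity of the finitely many maps `nacomp f n`, `n ≤ T`,
on a compact metric space. -/
lemma nacomp_uniform {X : Type*} [MetricSpace X] [CompactSpace X] (f : ℕ → X → X)
    (hf : ∀ n, Continuous (f n)) (ε : ℝ) (hε : 0 < ε) (T : ℕ) :
    ∃ δ > 0, ∀ n ≤ T, ∀ x x' : X, dist x x' < δ →
      dist (nacomp f n x) (nacomp f n x') ≤ ε := by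
  induction T with
  | zero =>
    refine ⟨ε, hε, fun n hn x x' hd => ?_⟩
    rw [Nat.le_zero] at hn
    subst hn
    simpa [nacomp] using hd.le
  | succ T ih =>
    obtain ⟨δ₀, hδ₀, h0⟩ := ih
    obtain ⟨δ₁, hδ₁, h1⟩ := Metric.uniformContinuous_iff.mp
      (CompactSpace.uniformContinuous_of_continuous (nacomp_continuous f hf (T + 1))) ε hε
    refine ⟨min δ₀ δ₁, lt_min hδ₀ hδ₁, fun n hn x x' hd => ?_⟩
    rcases Nat.lt_succ_iff_lt_or_eq.mp (Nat.lt_succ_of_le hn) with hcase | hcase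
    · exact h0 n (Nat.lt_succ_iff.mp hcase) x x' (hd.trans_le (min_le_left _ _))
    · subst hcase
      exact (h1 (hd.trans_le (min_le_right _ _))).le

/-- The time-`n` map of the induced system is pushforward by `nacomp f n`. -/
lemma nacomp_inducedMap_toMeasure {X : Type*} [MetricSpace X] [MeasurableSpace X] [BorelSpace X]
    (f : ℕ → X → X) (hf : ∀ n, Continuous (f n))
    (μ : LevyProkhorov (ProbabilityMeasure X)) (n : ℕ) :
    (ProbabilityMeasure.toMeasure
        (LevyProkhorov.toMeasureEquiv (α := ProbabilityMeasure X) (nacomp (fun n => inducedMap (f n) (hf n)) n μ)))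
      = (ProbabilityMeasure.toMeasure (LevyProkhorov.toMeasureEquiv (α := ProbabilityMeasure X) μ)).map (nacomp f n) := by
  induction n with
  | zero =>
    simp [nacomp, Measure.map_id]
  | succ n ih =>
    have : nacomp (fun n => inducedMap (f n) (hf n)) (n + 1) μ
        = inducedMap (f n) (hf n) (nacomp (fun n => inducedMap (f n) (hf n)) n μ) := rfl
    rw [this]
    show (ProbabilityMeasure.toMeasure
        ((LevyProkhorov.toMeasureEquiv (α := ProbabilityMeasure X)
          (nacomp (fun n => inducedMap (f n) (hf n)) n μ)).map
            (hf n).measurable.aemeasurable))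
      = _
    rw [ProbabilityMeasure.toMeasure_map, ih,
      Measure.map_map (hf n).measurable (nacomp_continuous f hf n).measurable]
    rfl

/-- If `(X, f_{0,∞})` has the specification property, then so does the induced system
`(𝓜(X), f̂_{0,∞})`. -/
theorem induced_specification_of_specification
    {X : Type*} [MetricSpace X] [CompactSpace X] [MeasurableSpace X] [BorelSpace X]
    (f : ℕ → X → X) (hf : ∀ n, Continuous (f n)) (h : NASpecification f) :
    NASpecification (fun n => inducedMap (f n) (hf n)) := by
  classical
  intro ε hε
  have hε3 : (0 : ℝ) < ε / 3 := by linarith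
  obtain ⟨M, hM1, hM⟩ := h (ε / 3) hε3
  refine ⟨M, hM1, ?_⟩
  intro k hk y a b hab hgap
  have hk0 : 0 < k := by omega
  have hX : Nonempty X := (LevyProkhorov.toMeasureEquiv (α := ProbabilityMeasure X) (y 0)).nonempty
  -- Uniform equicontinuity up to the last time of the windows.
  set T₀ : ℕ := (Finset.range k).sup b with hT₀def
  obtain ⟨δ, hδpos, hδ⟩ := nacomp_uniform f hf (ε / 3) hε3 T₀
  -- Finite cover of X by balls of radius δ/2.
  obtain ⟨t, ht⟩ := isCompact_univ.elim_finite_subcover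
    (fun x : X => Metric.ball x (δ / 2)) (fun _ => Metric.isOpen_ball)
    (fun x _ => Set.mem_iUnion.2 ⟨x, Metric.mem_ball_self (by linarith)⟩)
  have hJ : 0 < t.card := by
    rcases hX with ⟨x₀⟩
    have := ht (Set.mem_univ x₀)
    simp only [Set.mem_iUnion] at this
    obtain ⟨p, hp, _⟩ := this
    exact Finset.card_pos.mpr ⟨p, hp⟩
  set e : Fin t.card → X := fun j => ((t.equivFin.symm j : t) : X) with hedef
  set E : ℕ → X := fun m => e ⟨m % t.card, Nat.mod_lt m hJ⟩ with hEdef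
  have hcov : ∀ x : X, ∃ m : ℕ, dist x (E m) < δ / 2 := by
    intro x
    have := ht (Set.mem_univ x)
    simp only [Set.mem_iUnion] at this
    obtain ⟨p, hp, hxp⟩ := this
    refine ⟨(t.equivFin ⟨p, hp⟩ : Fin t.card), ?_⟩
    have h1 : E ((t.equivFin ⟨p, hp⟩ : Fin t.card) : ℕ) = p := by
      have hlt : ((t.equivFin ⟨p, hp⟩ : Fin t.card) : ℕ) < t.card :=
        (t.equivFin ⟨p, hp⟩).isLt
      simp only [hEdef, hedef]
      rw [show (⟨((t.equivFin ⟨p, hp⟩ : Fin t.card) : ℕ) % t.card, _⟩ : Fin t.card)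
          = t.equivFin ⟨p, hp⟩ from Fin.ext (by simp [Nat.mod_eq_of_lt hlt])]
      simp
    rw [h1]
    exact Metric.mem_ball.mp hxp
  -- Measurable nearest-index map.
  set nidx : X → ℕ := fun x => Nat.find (hcov x) with hnidxdef
  have hnidx_spec : ∀ x : X, dist x (E (nidx x)) < δ / 2 := fun x => Nat.find_spec (hcov x)
  have hnidx_meas : Measurable nidx := by
    apply measurable_to_countable'
    intro m
    have : nidx ⁻¹' {m}
        = (Metric.ball (E m) (δ / 2)
            ∩ ⋂ (l : ℕ) (_ : l < m), (Metric.ball (E l) (δ / 2))ᶜ) := by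
      ext x
      simp only [Set.mem_preimage, Set.mem_singleton_iff, hnidxdef, Nat.find_eq_iff,
        Set.mem_inter_iff, Set.mem_iInter, Set.mem_compl_iff, Metric.mem_ball]
    rw [this]
    exact Metric.isOpen_ball.measurableSet.inter
      (MeasurableSet.iInter fun l => MeasurableSet.iInter fun _ =>
        Metric.isOpen_ball.measurableSet.compl)
  have hE_meas : Measurable E := measurable_of_countable E
  -- Base product measure on index sequences.
  set d : Fin k → Measure ℕ :=
    fun i => (ProbabilityMeasure.toMeasure (LevyProkhorov.toMeasureEquiv (α := ProbabilityMeasure X) (y (i : ℕ)))).map nidx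
    with hddef
  haveI hdprob : ∀ i, IsProbabilityMeasure (d i) :=
    fun i => Measure.isProbabilityMeasure_map hnidx_meas.aemeasurable
  set m : Measure (Fin k → ℕ) := Measure.pi d with hmdef
  haveI : IsProbabilityMeasure m := Measure.pi.instIsProbabilityMeasure d
  -- Tracing points from the specification property on X.
  set yv : (Fin k → ℕ) → ℕ → X :=
    fun v i => E (v ⟨i % k, Nat.mod_lt i hk0⟩) with hyvdef
  have hspec := fun v : Fin k → ℕ => hM k hk (yv v) a b hab hgap
  set Z : (Fin k → ℕ) → X := fun v => (hspec v).choose with hZdef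
  have hZspec : ∀ v : Fin k → ℕ, ∀ i, i < k → ∀ n, a i ≤ n → n ≤ b i →
      dist (nacomp f n (Z v)) (nacomp f n (yv v i)) ≤ ε / 3 :=
    fun v => (hspec v).choose_spec
  have hZ_meas : Measurable Z := measurable_of_countable Z
  set z' : Measure X := m.map Z with hz'def
  haveI : IsProbabilityMeasure z' := Measure.isProbabilityMeasure_map hZ_meas.aemeasurable
  refine ⟨(LevyProkhorov.toMeasureEquiv (α := ProbabilityMeasure X)).symm ⟨z', inferInstance⟩, ?_⟩
  intro i hi n hai hbi
  have hnT₀ : n ≤ T₀ := hbi.trans (Finset.le_sup (Finset.mem_range.mpr hi))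
  set T : X → X := nacomp f n with hTdef
  have hT_meas : Measurable T := (nacomp_continuous f hf n).measurable
  set p : X → X := fun x => E (nidx x) with hpdef
  have hp_meas : Measurable p := hE_meas.comp hnidx_meas
  set yiM : Measure X := ProbabilityMeasure.toMeasure (LevyProkhorov.toMeasureEquiv (α := ProbabilityMeasure X) (y i)) with hyiMdef
  set φ : (Fin k → ℕ) → X := fun v => E (v ⟨i, hi⟩) with hφdef
  have hφ_meas : Measurable φ := measurable_of_countable φ
  -- identification of the discretized measure
  have hmid : m.map (T ∘ φ) = yiM.map (T ∘ p) := by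
    have h1 : m.map φ = yiM.map p := by
      have hφeq : φ = E ∘ Function.eval (⟨i, hi⟩ : Fin k) := rfl
      rw [hφeq, ← Measure.map_map hE_meas (measurable_pi_apply _),
        measure_pi_map_eval d ⟨i, hi⟩, hddef]
      simp only
      rw [Measure.map_map hE_meas hnidx_meas]
      rfl
    rw [← Measure.map_map hT_meas hφ_meas, h1, Measure.map_map hT_meas hp_meas]
  -- first comparison: the tracing measure vs the discretized measure
  have hcomp1 : levyProkhorovEDist (m.map (T ∘ Z)) (m.map (T ∘ φ))
      ≤ ENNReal.ofReal (ε / 3) := by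
    apply levyProkhorovEDist_map_le_of_forall_dist_le m _ _ (hT_meas.comp hZ_meas)
      (hT_meas.comp hφ_meas) hε3.le
    intro v
    have := hZspec v i hi n hai hbi
    have hfin : (⟨i % k, Nat.mod_lt i hk0⟩ : Fin k) = ⟨i, hi⟩ := by
      ext
      simp [Nat.mod_eq_of_lt hi]
    have hyvi : yv v i = φ v := by
      simp only [hyvdef, hφdef, hfin]
    rw [hyvi] at this
    exact this
  -- second comparison: the discretized measure vs the original measure
  have hcomp2 : levyProkhorovEDist (yiM.map (T ∘ p)) (yiM.map T)
      ≤ ENNReal.ofReal (ε / 3) := by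
    apply levyProkhorovEDist_map_le_of_forall_dist_le yiM _ _ (hT_meas.comp hp_meas)
      hT_meas hε3.le
    intro x
    apply hδ n hnT₀
    rw [dist_comm]
    exact lt_of_lt_of_le (hnidx_spec x) (by linarith)
  -- combine
  have hchain : levyProkhorovEDist (z'.map T) (yiM.map T) ≤ ENNReal.ofReal ε := by
    have hzT : z'.map T = m.map (T ∘ Z) := Measure.map_map hT_meas hZ_meas
    calc levyProkhorovEDist (z'.map T) (yiM.map T)
        ≤ levyProkhorovEDist (z'.map T) (m.map (T ∘ φ))
          + levyProkhorovEDist (m.map (T ∘ φ)) (yiM.map T) :=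
          levyProkhorovEDist_triangle _ _ _
      _ ≤ ENNReal.ofReal (ε / 3) + ENNReal.ofReal (ε / 3) := by
          refine add_le_add ?_ ?_
          · rw [hzT]; exact hcomp1
          · rw [hmid]; exact hcomp2
      _ = ENNReal.ofReal (ε / 3 + ε / 3) := (ENNReal.ofReal_add hε3.le hε3.le).symm
      _ ≤ ENNReal.ofReal ε := ENNReal.ofReal_le_ofReal (by linarith)
  -- conclude
  have e1 := nacomp_inducedMap_toMeasure f hf
    ((LevyProkhorov.toMeasureEquiv (α := ProbabilityMeasure X)).symm ⟨z', inferInstance⟩) n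
  have e2 := nacomp_inducedMap_toMeasure f hf (y i) n
  rw [LevyProkhorov.dist_probabilityMeasure_def, levyProkhorovDist]
  apply ENNReal.toReal_le_of_le_ofReal hε.le
  have heq : levyProkhorovEDist
      (ProbabilityMeasure.toMeasure
        (LevyProkhorov.toMeasureEquiv (α := ProbabilityMeasure X) (nacomp (fun n => inducedMap (f n) (hf n)) n
          ((LevyProkhorov.toMeasureEquiv (α := ProbabilityMeasure X)).symm ⟨z', inferInstance⟩))))
      (ProbabilityMeasure.toMeasure
        (LevyProkhorov.toMeasureEquiv (α := ProbabilityMeasure X) (nacomp (fun n => inducedMap (f n) (hf n)) n (y i))))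
      = levyProkhorovEDist (z'.map T) (yiM.map T) := by
    rw [e1, e2]
    rfl
  exact le_of_le_of_eq (le_of_eq heq) rfl |>.trans hchain
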